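/- arXiv:1007.1177 — 6 statements merged into one kernel-verified Lean document; each statement's English description precedes it below -/
import Mathlib

section
/- A linear map C : M_d(C) → M_{d'}(C) is completely positive if and only if its Choi operator R_C is positive semidefinite. -/
open Matrix Kronecker BigOperators
open scoped ComplexOrder

/-- The extension `Φ ⊗ id_n` of a linear map to the first tensor factor. -/
def extMap {d d' : ℕ} {n : Type*}
    (Φ : Matrix (Fin d) (Fin d) ℂ →ₗ[ℂ] Matrix (Fin d') (Fin d') ℂ)
    (X : Matrix (Fin d × n) (Fin d × n) ℂ) : Matrix (Fin d' × n) (Fin d' × n) ℂ :=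
  Matrix.of fun p q => Φ (Matrix.of fun m n => X (m, p.2) (n, q.2)) p.1 q.1

/-- The Choi operator `R_Φ := ∑ m n, Φ(|m⟩⟨n|) ⊗ |m⟩⟨n|`. -/
noncomputable def choi {d d' : ℕ}
    (Φ : Matrix (Fin d) (Fin d) ℂ →ₗ[ℂ] Matrix (Fin d') (Fin d') ℂ) :
    Matrix (Fin d' × Fin d) (Fin d' × Fin d) ℂ :=
  ∑ m : Fin d, ∑ n : Fin d,
    (Φ (Matrix.single m n 1)) ⊗ₖ Matrix.single m n (1 : ℂ)

lemma choi_apply {d d' : ℕ}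
    (Φ : Matrix (Fin d) (Fin d) ℂ →ₗ[ℂ] Matrix (Fin d') (Fin d') ℂ)
    (p1 q1 : Fin d') (p2 q2 : Fin d) :
    choi Φ (p1, p2) (q1, q2) = Φ (Matrix.single p2 q2 1) p1 q1 := by
  simp [choi, Matrix.sum_apply, Matrix.kroneckerMap_apply, Matrix.single,
    Finset.sum_ite_eq, ite_and]

lemma phi_eq_sum {d d' : ℕ}
    (Φ : Matrix (Fin d) (Fin d) ℂ →ₗ[ℂ] Matrix (Fin d') (Fin d') ℂ)
    (A : Matrix (Fin d) (Fin d) ℂ) :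
    Φ A = ∑ m, ∑ n, A m n • Φ (Matrix.single m n 1) := by
  conv_lhs => rw [Matrix.matrix_eq_sum_single A]
  simp only [map_sum]
  refine Finset.sum_congr rfl fun m _ => Finset.sum_congr rfl fun n _ => ?_
  rw [show Matrix.single m n (A m n) = A m n • Matrix.single m n (1:ℂ) by
    rw [Matrix.smul_single, smul_eq_mul, mul_one], _root_.map_smul]


lemma sum_rot {M : Type*} [AddCommMonoid M] {α β γ : Type*} [Fintype α] [Fintype β] [Fintype γ]
    (f : α → β → γ → M) :
    ∑ a, ∑ b, ∑ c, f a b c = ∑ c, ∑ a, ∑ b, f a b c := by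
  calc ∑ a, ∑ b, ∑ c, f a b c = ∑ a, ∑ c, ∑ b, f a b c :=
        Finset.sum_congr rfl fun a _ => Finset.sum_comm
    _ = ∑ c, ∑ a, ∑ b, f a b c := Finset.sum_comm

lemma kraus {d d' : ℕ}
    (Φ : Matrix (Fin d) (Fin d) ℂ →ₗ[ℂ] Matrix (Fin d') (Fin d') ℂ)
    (B : Matrix (Fin d' × Fin d) (Fin d' × Fin d) ℂ) (hB : choi Φ = Bᴴ * B)
    (A : Matrix (Fin d) (Fin d) ℂ) :
    Φ A = ∑ k : Fin d' × Fin d,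
      (Matrix.of fun p m => star (B k (p, m))) * A * (Matrix.of fun p m => star (B k (p, m)))ᴴ := by
  ext p q
  rw [phi_eq_sum]
  have hchoi : ∀ m n, Φ (Matrix.single m n 1) p q
      = ∑ k, star (B k (p, m)) * B k (q, n) := by
    intro m n
    have h := congrFun (congrFun hB.symm (p, m)) (q, n)
    rw [Matrix.mul_apply] at h
    simpa [choi_apply, Matrix.conjTranspose_apply] using h.symm
  simp only [Matrix.sum_apply, Matrix.smul_apply, smul_eq_mul, hchoi, Finset.mul_sum,
    Matrix.mul_apply, Matrix.conjTranspose_apply, Matrix.of_apply, star_star, Finset.sum_mul]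
  rw [sum_rot]
  refine Finset.sum_congr rfl fun k _ => ?_
  rw [Finset.sum_comm]
  exact Finset.sum_congr rfl fun n _ => Finset.sum_congr rfl fun m _ => by ring


lemma extMap_eq {d d' nn : ℕ}
    (Φ : Matrix (Fin d) (Fin d) ℂ →ₗ[ℂ] Matrix (Fin d') (Fin d') ℂ)
    (B : Matrix (Fin d' × Fin d) (Fin d' × Fin d) ℂ) (hB : choi Φ = Bᴴ * B)
    (X : Matrix (Fin d × Fin nn) (Fin d × Fin nn) ℂ) :
    extMap Φ X = ∑ k : Fin d' × Fin d,
      ((Matrix.of fun p m => star (B k (p, m))) ⊗ₖ (1 : Matrix (Fin nn) (Fin nn) ℂ)) * X *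
        ((Matrix.of fun p m => star (B k (p, m))) ⊗ₖ (1 : Matrix (Fin nn) (Fin nn) ℂ))ᴴ := by
  ext ⟨p1, i⟩ ⟨q1, j⟩
  show Φ (Matrix.of fun m n => X (m, i) (n, j)) p1 q1 = _
  rw [kraus Φ B hB]
  simp only [Matrix.sum_apply, Matrix.mul_apply, Matrix.conjTranspose_apply,
    Matrix.of_apply, star_star, Matrix.kroneckerMap_apply, Matrix.one_apply,
    Fintype.sum_prod_type, mul_ite, ite_mul, mul_one, mul_zero, one_mul, zero_mul,
    Finset.sum_ite_eq, Finset.sum_ite_eq', Finset.mem_univ, if_true,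
    star_one, star_zero, star_mul', apply_ite (star : ℂ → ℂ)]

/-- `Φ` is completely positive (i.e. `Φ ⊗ id_n` maps positive semidefinite
matrices to positive semidefinite matrices, for all `n`) iff its Choi operator is
positive semidefinite. -/
theorem completelyPositive_iff_choi_posSemidef {d d' : ℕ}
    (Φ : Matrix (Fin d) (Fin d) ℂ →ₗ[ℂ] Matrix (Fin d') (Fin d') ℂ) :
    (∀ (n : ℕ) (X : Matrix (Fin d × Fin n) (Fin d × Fin n) ℂ),
        X.PosSemidef → (extMap Φ X).PosSemidef) ↔ (choi Φ).PosSemidef := by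
  constructor
  · intro h
    set v : Fin d × Fin d → ℂ := fun p => if p.1 = p.2 then 1 else 0 with hv
    have hvs : ∀ a, star (v a) = v a := by
      intro a; simp [hv, apply_ite (star : ℂ → ℂ)]
    have hX : (Matrix.vecMulVec v v).PosSemidef := by
      refine Matrix.PosSemidef.of_dotProduct_mulVec_nonneg ?_ ?_
      · ext a b
        simp only [Matrix.conjTranspose_apply, Matrix.vecMulVec_apply, star_mul', hvs]
        ring
      · intro x
        have key : star x ⬝ᵥ (Matrix.vecMulVec v v) *ᵥ x = star (v ⬝ᵥ x) * (v ⬝ᵥ x) := by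
          simp only [dotProduct, Matrix.mulVec, Matrix.vecMulVec_apply,
            Pi.star_apply, star_sum, star_mul']
          rw [Finset.sum_mul_sum]
          simp only [Finset.mul_sum]
          refine Finset.sum_congr rfl fun a _ => Finset.sum_congr rfl fun b _ => ?_
          rw [hvs]
          ring
        rw [key]
        exact star_mul_self_nonneg _
    have h2 := h d (Matrix.vecMulVec v v) hX
    have heq : choi Φ = extMap Φ (Matrix.vecMulVec v v) := by
      ext ⟨p1, p2⟩ ⟨q1, q2⟩
      rw [choi_apply]
      show _ = Φ (Matrix.of fun m n => Matrix.vecMulVec v v (m, p2) (n, q2)) p1 q1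
      have harg : (Matrix.single p2 q2 (1:ℂ))
          = Matrix.of fun m n => Matrix.vecMulVec v v (m, p2) (n, q2) := by
        ext m n
        simp only [Matrix.of_apply, Matrix.vecMulVec_apply, hv, Matrix.single]
        split_ifs with h1 h2 h3 <;> simp_all
      rw [harg]
    rw [heq]
    exact h2
  · intro hchoi n X hX
    obtain ⟨B, hB⟩ : ∃ B : Matrix (Fin d' × Fin d) (Fin d' × Fin d) ℂ, choi Φ = Bᴴ * B := by
      open scoped MatrixOrder in
      obtain ⟨X, hX, -, hX2⟩ := CFC.exists_sqrt_of_isSelfAdjoint_of_quasispectrumRestricts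
        hchoi.isHermitian (QuasispectrumRestricts.nnreal_of_nonneg hchoi.nonneg)
      exact ⟨X, by rw [← Matrix.star_eq_conjTranspose, hX.star_eq, hX2]⟩
    rw [extMap_eq Φ B hB X]
    refine Finset.sum_induction _ _ (fun a b ha hb => ha.add hb) Matrix.PosSemidef.zero
      fun k _ => hX.mul_mul_conjTranspose_same _
end

section
/- Peres–Horodecki necessary criterion: if a bipartite positive semidefinite operator R on C^{d₁} ⊗ C^{d₂} is separable, then its partial transpose R^{T₂} (transposing the second tensor factor in the computational basis) is positive semidefinite. -/
open Matrix Kronecker BigOperators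
open scoped ComplexOrder

/-- A bipartite matrix is separable if it is a finite sum of tensor products of
positive semidefinite matrices. -/
def Separable {α β : Type*} [Fintype α] [Fintype β]
    (M : Matrix (α × β) (α × β) ℂ) : Prop :=
  ∃ (k : ℕ) (A : Fin k → Matrix α α ℂ) (B : Fin k → Matrix β β ℂ),
    (∀ i, (A i).PosSemidef) ∧ (∀ i, (B i).PosSemidef) ∧ M = ∑ i, (A i) ⊗ₖ (B i)

/-- Partial transpose of the second tensor factor (in the computational basis). -/
def ptranspose {α β : Type*} (M : Matrix (α × β) (α × β) ℂ) :
    Matrix (α × β) (α × β) ℂ :=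
  Matrix.of fun p q => M (p.1, q.2) (q.1, p.2)

lemma kron_conjTranspose {α β : Type*} (A : Matrix α α ℂ) (B : Matrix β β ℂ) :
    (A ⊗ₖ B)ᴴ = Aᴴ ⊗ₖ Bᴴ := by
  ext ⟨i, j⟩ ⟨k, l⟩
  simp [conjTranspose_apply, kroneckerMap_apply, mul_comm]

lemma kron_posSemidef {α β : Type*} [Fintype α] [Fintype β] [DecidableEq α] [DecidableEq β]
    {A : Matrix α α ℂ} {B : Matrix β β ℂ} (hA : A.PosSemidef) (hB : B.PosSemidef) :
    (A ⊗ₖ B).PosSemidef := by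
  obtain ⟨C, rfl⟩ : ∃ C, A = Cᴴ * C := by
    open scoped MatrixOrder in exact CStarAlgebra.nonneg_iff_eq_star_mul_self.mp hA.nonneg
  obtain ⟨D, rfl⟩ : ∃ D, B = Dᴴ * D := by
    open scoped MatrixOrder in exact CStarAlgebra.nonneg_iff_eq_star_mul_self.mp hB.nonneg
  rw [Matrix.mul_kronecker_mul, ← kron_conjTranspose]
  exact posSemidef_conjTranspose_mul_self _

lemma ptranspose_sum {α β : Type*} {k : ℕ} (M : Fin k → Matrix (α × β) (α × β) ℂ) :
    ptranspose (∑ i, M i) = ∑ i, ptranspose (M i) := by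
  ext p q
  simp only [ptranspose, Matrix.sum_apply, Matrix.of_apply]

lemma ptranspose_kron {α β : Type*} (A : Matrix α α ℂ) (B : Matrix β β ℂ) :
    ptranspose (A ⊗ₖ B) = A ⊗ₖ Bᵀ := by
  ext ⟨i, j⟩ ⟨k, l⟩
  simp [ptranspose, kroneckerMap_apply]

set_option maxHeartbeats 1000000 in
/-- Peres–Horodecki, necessity: if a bipartite positive semidefinite
operator is separable, then its partial transpose is positive semidefinite. -/
theorem separable_implies_ptranspose_posSemidef {d₁ d₂ : ℕ}
    (R : Matrix (Fin d₁ × Fin d₂) (Fin d₁ × Fin d₂) ℂ)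
    (hR : R.PosSemidef) (hsep : Separable R) :
    (ptranspose R).PosSemidef := by
  obtain ⟨k, A, B, hA, hB, rfl⟩ := hsep
  rw [ptranspose_sum]
  apply Finset.sum_induction _ _ (fun a b ha hb => ha.add hb) (PosSemidef.zero)
  intro i _
  rw [ptranspose_kron]
  exact kron_posSemidef (hA i) ((hB i).transpose)
end

section
/- Contrapositive of PPT criterion: if the partial transpose of a bipartite positive semidefinite operator R has a negative eigenvalue, then R is not separable (i.e., R is entangled). -/
open Matrix Kronecker BigOperators
open scoped ComplexOrder

lemma psd_sum {n : Type*} [Fintype n] {k : ℕ} (M : Fin k → Matrix n n ℂ)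
    (h : ∀ i, (M i).PosSemidef) : (∑ i, M i).PosSemidef := by
  constructor
  · show (∑ i, M i)ᴴ = _
    rw [Matrix.conjTranspose_sum]
    exact Finset.sum_congr rfl fun i _ => (h i).1
  · exact (Matrix.posSemidef_sum Finset.univ fun i _ => h i).2

/-- contrapositive of the PPT criterion: if the partial transpose of a
bipartite positive semidefinite operator has a negative eigenvalue, then the operator
is not separable, i.e. it is entangled. -/
theorem negative_eigenvalue_ptranspose_implies_entangled {d₁ d₂ : ℕ}
    (R : Matrix (Fin d₁ × Fin d₂) (Fin d₁ × Fin d₂) ℂ) (hR : R.PosSemidef)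
    (hneg : ∃ (c : ℝ) (v : Fin d₁ × Fin d₂ → ℂ), c < 0 ∧ v ≠ 0 ∧
      (ptranspose R).mulVec v = (c : ℂ) • v) :
    ¬ Separable R := by
  rintro ⟨k, A, B, hA, hB, rfl⟩
  obtain ⟨c, v, hc, hv, heig⟩ := hneg
  -- the partial transpose is positive semidefinite
  have hPT : (ptranspose (∑ i, A i ⊗ₖ B i)).PosSemidef := by
    rw [ptranspose_sum]
    refine psd_sum _ fun i => ?_
    rw [ptranspose_kron]
    exact kron_posSemidef (hA i) (hB i).transpose
  have h0 : (0 : ℂ) ≤ star v ⬝ᵥ (ptranspose (∑ i, A i ⊗ₖ B i)).mulVec v := hPT.dotProduct_mulVec_nonneg v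
  rw [heig] at h0
  have hs : star v ⬝ᵥ ((c : ℂ) • v) = (c : ℂ) * (star v ⬝ᵥ v) := by
    simp [dotProduct_smul, smul_eq_mul]
  rw [hs] at h0
  have hpos : (0 : ℂ) < star v ⬝ᵥ v :=
    lt_of_le_of_ne (dotProduct_star_self_nonneg v)
      (fun h => hv (dotProduct_star_self_eq_zero.mp h.symm))
  rw [Complex.lt_def] at hpos
  rw [Complex.le_def] at h0
  have h1 := h0.1
  simp [Complex.mul_re, ← hpos.2] at h1
  simp at hpos
  nlinarith [hpos.1, h1]
end

section
/- Choi's extremality criterion (one direction): a completely positive trace-preserving map C with Kraus representation C(ρ) = Σ_k K_k ρ K_k† is extremal in the convex set of channels if the set {K_j† K_k}_{j,k} is linearly independent. -/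
open Matrix Kronecker BigOperators
open scoped ComplexOrder

/-- A channel: completely positive (positive semidefinite Choi operator) and
trace-preserving linear map. -/
def IsChannel {d d' : ℕ}
    (Φ : Matrix (Fin d) (Fin d) ℂ →ₗ[ℂ] Matrix (Fin d') (Fin d') ℂ) : Prop :=
  (choi Φ).PosSemidef ∧ ∀ X, (Φ X).trace = X.trace

lemma choi_apply_s15 {d d' : ℕ}
    (Φ : Matrix (Fin d) (Fin d) ℂ →ₗ[ℂ] Matrix (Fin d') (Fin d') ℂ)
    (p q : Fin d' × Fin d) :
    choi Φ p q = Φ (Matrix.single p.2 q.2 1) p.1 q.1 := by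
  simp only [choi, Matrix.sum_apply, Matrix.kroneckerMap_apply, Matrix.single,
    Matrix.of_apply, mul_ite, mul_one, mul_zero, ite_and]
  rw [Finset.sum_eq_single p.2 (fun b _ hb => by simp [hb]) (by simp)]
  rw [Finset.sum_eq_single q.2 (fun b _ hb => by simp [hb]) (by simp)]
  simp

lemma choi_inj {d d' : ℕ}
    {Φ Ψ : Matrix (Fin d) (Fin d) ℂ →ₗ[ℂ] Matrix (Fin d') (Fin d') ℂ}
    (h : choi Φ = choi Ψ) : Φ = Ψ := by
  have hb : ∀ m n : Fin d, Φ (Matrix.single m n 1) = Ψ (Matrix.single m n 1) := by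
    intro m n
    ext i j
    have := congrFun (congrFun h (i, m)) (j, n)
    simpa [choi_apply_s15] using this
  ext X : 1
  rw [Matrix.matrix_eq_sum_single X]
  simp only [map_sum]
  refine Finset.sum_congr rfl fun m _ => Finset.sum_congr rfl fun n _ => ?_
  have e : Matrix.single m n (X m n) = X m n • Matrix.single m n (1:ℂ) := by
    rw [Matrix.smul_single, smul_eq_mul, mul_one]
  rw [e, LinearMap.map_smul, LinearMap.map_smul, hb]

/-- Choi's extremality criterion, one direction: a channel `C` with
Kraus representation `C(ρ) = ∑ k, K_k ρ K_k†`, `∑ k, K_k† K_k = 1`, is extremal in the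
convex set of channels whenever the family `{K_j† K_k}_{j,k}` is linearly independent:
if `C = ½(C₁ + C₂)` for channels `C₁, C₂`, then `C₁ = C₂ = C`. -/
theorem choi_extremality {d d' N : ℕ}
    (K : Fin N → Matrix (Fin d') (Fin d) ℂ)
    (hK : ∑ k, (K k)ᴴ * K k = 1)
    (hLI : LinearIndependent ℂ (fun jk : Fin N × Fin N => (K jk.1)ᴴ * K jk.2))
    (C : Matrix (Fin d) (Fin d) ℂ →ₗ[ℂ] Matrix (Fin d') (Fin d') ℂ)
    (hC : ∀ ρ, C ρ = ∑ k, K k * ρ * (K k)ᴴ) :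
    ∀ C₁ C₂ : Matrix (Fin d) (Fin d) ℂ →ₗ[ℂ] Matrix (Fin d') (Fin d') ℂ,
      IsChannel C₁ → IsChannel C₂ →
      (∀ ρ, C ρ = (2 : ℂ)⁻¹ • (C₁ ρ + C₂ ρ)) →
      C₁ = C₂ ∧ C₁ = C := by
  intro C₁ C₂ h₁ h₂ hmix
  classical
  set V : Matrix (Fin d' × Fin d) (Fin N) ℂ :=
    Matrix.of fun (p : Fin d' × Fin d) (k : Fin N) => K k p.1 p.2 with hV
  -- Step A : choi C = V * Vᴴ
  have hA : choi C = V * Vᴴ := by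
    ext p q
    rw [choi_apply_s15, hC]
    simp only [Matrix.sum_apply, Matrix.mul_apply, Matrix.conjTranspose_apply, Matrix.of_apply,
      Matrix.single, ite_and, mul_ite, ite_mul, mul_zero, zero_mul, mul_one, one_mul, hV]
    refine Finset.sum_congr rfl fun k _ => ?_
    rw [Finset.sum_eq_single q.2 (fun b _ hb => by simp [hb.symm]) (by simp)]
    rw [Finset.sum_eq_single p.2 (fun b _ hb => by simp [hb.symm]) (by simp)]
    simp
  -- Step B : choi C = 2⁻¹ • (choi C₁ + choi C₂)
  have hmixc : choi C = (2:ℂ)⁻¹ • (choi C₁ + choi C₂) := by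
    ext p q
    rw [choi_apply_s15, hmix]
    simp [choi_apply_s15]
  -- linear independence of the K's
  have hKLI : ∀ c : Fin N → ℂ, ∑ k, c k • K k = 0 → ∀ k, c k = 0 := by
    intro c hc k
    have h0 : ∑ p : Fin N × Fin N, (if p.1 = k then c p.2 else 0) • ((K p.1)ᴴ * K p.2) = 0 := by
      rw [Fintype.sum_prod_type]
      rw [Finset.sum_eq_single k (fun b _ hb => by simp [hb]) (by simp)]
      simp only [if_pos rfl, if_true]
      have : ∑ x : Fin N, c x • ((K k)ᴴ * K x) = (K k)ᴴ * ∑ x : Fin N, c x • K x := by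
        rw [Matrix.mul_sum]
        exact Finset.sum_congr rfl fun x _ => (Matrix.mul_smul _ _ _).symm
      rw [this, hc, Matrix.mul_zero]
    have := Fintype.linearIndependent_iff.mp hLI _ h0 (k, k)
    simpa using this
  -- V has trivial kernel
  have hVker : ∀ c : Fin N → ℂ, V *ᵥ c = 0 → c = 0 := by
    intro c hc
    funext k
    refine hKLI c ?_ k
    ext i m
    have := congrFun hc (i, m)
    simpa [Matrix.mulVec, dotProduct, hV, Matrix.sum_apply, mul_comm] using this
  -- Gram matrix
  set G : Matrix (Fin N) (Fin N) ℂ := Vᴴ * V with hG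
  have hGdet : IsUnit G.det := by
    rw [isUnit_iff_ne_zero]
    intro hdet
    obtain ⟨c, hc0, hc⟩ := Matrix.exists_mulVec_eq_zero_iff.mpr hdet
    apply hc0
    apply hVker
    have hq : star c ⬝ᵥ G *ᵥ c = 0 := by rw [hc, dotProduct_zero]
    rw [hG, ← Matrix.mulVec_mulVec, Matrix.dotProduct_mulVec, Matrix.vecMul_conjTranspose,
      star_star, dotProduct_star_self_eq_zero] at hq
    exact hq
  have hGG : G * G⁻¹ = 1 := Matrix.mul_nonsing_inv G hGdet
  have hGG' : G⁻¹ * G = 1 := Matrix.nonsing_inv_mul G hGdet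
  set P : Matrix (Fin d' × Fin d) (Fin d' × Fin d) ℂ := V * G⁻¹ * Vᴴ with hP
  have hVP : Vᴴ * P = Vᴴ := by
    rw [hP, ← Matrix.mul_assoc, ← Matrix.mul_assoc, ← hG, hGG, Matrix.one_mul]
  set A₁ := choi C₁ with hA₁
  set A₂ := choi C₂ with hA₂
  -- kernel property
  have hker : ∀ y : (Fin d' × Fin d) → ℂ, Vᴴ *ᵥ y = 0 → A₁ *ᵥ y = 0 := by
    intro y hy
    have hAy : choi C *ᵥ y = 0 := by
      rw [hA, ← Matrix.mulVec_mulVec, hy, Matrix.mulVec_zero]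
    have hsum : star y ⬝ᵥ A₁ *ᵥ y + star y ⬝ᵥ A₂ *ᵥ y = 0 := by
      have h2 : (2:ℂ) • choi C = A₁ + A₂ := by
        rw [hmixc, smul_smul]
        norm_num
      have : star y ⬝ᵥ (A₁ + A₂) *ᵥ y = star y ⬝ᵥ ((2:ℂ) • choi C) *ᵥ y := by rw [h2]
      rw [Matrix.add_mulVec, dotProduct_add] at this
      rw [this, Matrix.smul_mulVec, hAy, smul_zero, dotProduct_zero]
    have hq1 : star y ⬝ᵥ A₁ *ᵥ y = 0 := by
      have n1 := h₁.1.dotProduct_mulVec_nonneg y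
      have n2 := h₂.1.dotProduct_mulVec_nonneg y
      have hle : star y ⬝ᵥ A₁ *ᵥ y ≤ 0 := by
        calc star y ⬝ᵥ A₁ *ᵥ y ≤ star y ⬝ᵥ A₁ *ᵥ y + star y ⬝ᵥ A₂ *ᵥ y :=
          le_add_of_nonneg_right n2
        _ = 0 := hsum
      exact le_antisymm hle n1
    exact (h₁.1.dotProduct_mulVec_zero_iff y).mp hq1
  -- A₁ = A₁ * P
  have hA1P : A₁ = A₁ * P := by
    have hz : A₁ * (1 - P) = 0 := by
      have hv : ∀ x, (A₁ * (1 - P)) *ᵥ x = 0 := by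
        intro x
        rw [← Matrix.mulVec_mulVec]
        apply hker
        rw [Matrix.mulVec_mulVec, Matrix.mul_sub, Matrix.mul_one, hVP, sub_self,
          Matrix.zero_mulVec]
      ext i j
      have := congrFun (hv (Pi.single j 1)) i
      simpa using this
    have hone : P + (1 - P) = 1 := by abel
    calc A₁ = A₁ * 1 := by rw [Matrix.mul_one]
    _ = A₁ * P + A₁ * (1 - P) := by rw [← Matrix.mul_add, hone]
    _ = A₁ * P := by rw [hz, add_zero]
  -- P is Hermitian, A₁ Hermitian, so A₁ = P * A₁
  have hPh : Pᴴ = P := by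
    rw [hP]
    rw [Matrix.conjTranspose_mul, Matrix.conjTranspose_mul, Matrix.conjTranspose_conjTranspose,
      Matrix.conjTranspose_nonsing_inv]
    have : Gᴴ = G := by rw [hG, Matrix.conjTranspose_mul, Matrix.conjTranspose_conjTranspose]
    rw [this, Matrix.mul_assoc]
  have hA1h : A₁ᴴ = A₁ := h₁.1.1
  have hPA1 : A₁ = P * A₁ := by
    conv_lhs => rw [← hA1h, hA1P]
    rw [Matrix.conjTranspose_mul, hPh, hA1h]
  set B : Matrix (Fin N) (Fin N) ℂ := G⁻¹ * (Vᴴ * A₁ * V) * G⁻¹ with hB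
  have hA1B : A₁ = V * B * Vᴴ := by
    calc A₁ = P * (A₁ * P) := by rw [← hA1P, ← hPA1]
    _ = V * B * Vᴴ := by rw [hP, hB]; simp only [Matrix.mul_assoc]
  -- partial trace of A₁ is the identity (trace preservation)
  have hTP1 : ∀ m n : Fin d, ∑ i, A₁ (i, m) (i, n) = (1 : Matrix (Fin d) (Fin d) ℂ) n m := by
    intro m n
    have ht : (C₁ (Matrix.single m n 1)).trace = (Matrix.single m n (1:ℂ)).trace :=
      h₁.2 _
    have h1 : ∑ i, A₁ (i, m) (i, n) = (C₁ (Matrix.single m n 1)).trace := by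
      simp [hA₁, choi_apply_s15, Matrix.trace, Matrix.diag]
    rw [h1, ht]
    by_cases hmn : m = n
    · subst hmn
      simp [Matrix.trace, Matrix.diag, Matrix.single, Matrix.one_apply]
    · simp only [Matrix.trace, Matrix.diag, Matrix.single, Matrix.one_apply, hmn,
        Ne.symm hmn, if_false, Matrix.of_apply, ite_and]
      rw [Finset.sum_eq_zero]
      intro x _
      by_cases hx : m = x
      · subst hx; rw [if_pos rfl, if_neg (fun h => hmn h.symm)]
      · rw [if_neg hx]
  -- key identity
  have hBsum : ∑ j, ∑ k, B j k • ((K k)ᴴ * K j) = (1 : Matrix (Fin d) (Fin d) ℂ) := by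
    ext n m
    simp only [Matrix.sum_apply, Matrix.smul_apply, smul_eq_mul]
    have e1 : ∀ i : Fin d', A₁ (i, m) (i, n)
        = ∑ j, ∑ k, K j i m * B j k * star (K k i n) := by
      intro i
      rw [hA1B]
      simp only [Matrix.mul_apply, Matrix.conjTranspose_apply, Matrix.of_apply, hV,
        Finset.sum_mul]
      rw [Finset.sum_comm]
    calc ∑ j, ∑ k, B j k * ((K k)ᴴ * K j) n m
        = ∑ j, ∑ k, ∑ i, K j i m * B j k * star (K k i n) := by
          refine Finset.sum_congr rfl fun j _ => Finset.sum_congr rfl fun k _ => ?_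
          rw [Matrix.mul_apply, Finset.mul_sum]
          refine Finset.sum_congr rfl fun i _ => ?_
          simp only [Matrix.conjTranspose_apply]
          ring
      _ = ∑ j, ∑ i, ∑ k, K j i m * B j k * star (K k i n) :=
          Finset.sum_congr rfl fun j _ => Finset.sum_comm
      _ = ∑ i, ∑ j, ∑ k, K j i m * B j k * star (K k i n) := Finset.sum_comm
      _ = ∑ i, A₁ (i, m) (i, n) := by
          exact Finset.sum_congr rfl fun i _ => (e1 i).symm
      _ = (1 : Matrix (Fin d) (Fin d) ℂ) n m := hTP1 m n
  -- linear independence forces B = 1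
  have hB1 : B = 1 := by
    have h0 : ∑ p : Fin N × Fin N,
        (B p.2 p.1 - if p.2 = p.1 then 1 else 0) • ((K p.1)ᴴ * K p.2) = 0 := by
      rw [Fintype.sum_prod_type]
      calc ∑ k, ∑ j, ((B j k - if j = k then 1 else 0) • ((K k)ᴴ * K j))
          = (∑ k, ∑ j, B j k • ((K k)ᴴ * K j))
            - ∑ k, ∑ j, (if j = k then (1:ℂ) else 0) • ((K k)ᴴ * K j) := by
            simp [sub_smul, Finset.sum_sub_distrib]
        _ = 0 := by
            rw [Finset.sum_comm, hBsum]
            have h2 : ∑ k, ∑ j, (if j = k then (1:ℂ) else 0) • ((K k)ᴴ * K j)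
                = ∑ k, (K k)ᴴ * K k := by
              refine Finset.sum_congr rfl fun k _ => ?_
              rw [Finset.sum_eq_single k (fun b _ hb => by simp [hb]) (by simp)]
              simp
            rw [h2, hK, sub_self]
    have hg := Fintype.linearIndependent_iff.mp hLI _ h0
    ext j k
    have hjk := hg (k, j)
    simp only [sub_eq_zero] at hjk
    rw [hjk, Matrix.one_apply]
  have hC1C : A₁ = choi C := by
    rw [hA, hA1B, hB1, Matrix.mul_one]
  have hC2C : A₂ = choi C := by
    ext p q
    have h' := congrFun (congrFun hmixc p) q
    rw [hC1C] at h'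
    simp only [Matrix.smul_apply, Matrix.add_apply, smul_eq_mul] at h'
    have goal : A₂ p q = choi C p q := by linear_combination (-2 : ℂ) * h'
    exact goal
  have e1 : C₁ = C := choi_inj hC1C
  have e2 : C₂ = C := choi_inj hC2C
  exact ⟨e1.trans e2.symm, e1⟩
end

section
/- Tsirelson's bound: for observables A₀, A₁ on H_A and B₀, B₁ on H_B with operator norm at most 1 and each A_n commuting with each B_m (e.g. acting on different tensor factors), and any state ρ, |⟨A₀B₀⟩ + ⟨A₀B₁⟩ + ⟨A₁B₀⟩ − ⟨A₁B₁⟩| ≤ 2√2, where ⟨A_nB_m⟩ = Tr[ρ (A_n ⊗ B_m)]. -/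
open Matrix Kronecker BigOperators
open scoped ComplexOrder


variable {a b : ℕ}

lemma posSemidef_iff_eq_transpose_mul_self {n : Type*} [Fintype n] {A : Matrix n n ℂ} :
    A.PosSemidef ↔ ∃ B : Matrix n n ℂ, A = Bᴴ * B := by
  constructor
  · intro hA
    classical
    open scoped MatrixOrder in
    obtain ⟨B, hB⟩ := CStarAlgebra.nonneg_iff_eq_star_mul_self.mp hA.nonneg
    exact ⟨B, by rw [hB, star_eq_conjTranspose]⟩
  · rintro ⟨B, rfl⟩
    exact posSemidef_conjTranspose_mul_self B

lemma kron_sub (A : Matrix (Fin a) (Fin a) ℂ) (B C : Matrix (Fin b) (Fin b) ℂ) :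
    A ⊗ₖ (B - C) = A ⊗ₖ B - A ⊗ₖ C := by
  ext ⟨i,j⟩ ⟨k,l⟩; simp [mul_sub]

lemma sub_kron (A B : Matrix (Fin a) (Fin a) ℂ) (C : Matrix (Fin b) (Fin b) ℂ) :
    (A - B) ⊗ₖ C = A ⊗ₖ C - B ⊗ₖ C := by
  ext ⟨i,j⟩ ⟨k,l⟩; simp [sub_mul]

lemma neg_kron (A : Matrix (Fin a) (Fin a) ℂ) (C : Matrix (Fin b) (Fin b) ℂ) :
    (-A) ⊗ₖ C = -(A ⊗ₖ C) := by
  ext ⟨i,j⟩ ⟨k,l⟩; simp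

lemma kron_conjT (A : Matrix (Fin a) (Fin a) ℂ) (B : Matrix (Fin b) (Fin b) ℂ) :
    (A ⊗ₖ B)ᴴ = Aᴴ ⊗ₖ Bᴴ := by
  ext ⟨i,j⟩ ⟨k,l⟩; simp [conjTranspose_apply, mul_comm]

lemma kron_psd {A : Matrix (Fin a) (Fin a) ℂ} {B : Matrix (Fin b) (Fin b) ℂ}
    (hA : A.PosSemidef) (hB : B.PosSemidef) : (A ⊗ₖ B).PosSemidef := by
  obtain ⟨C, rfl⟩ := posSemidef_iff_eq_transpose_mul_self.mp hA
  obtain ⟨D, rfl⟩ := posSemidef_iff_eq_transpose_mul_self.mp hB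
  rw [mul_kronecker_mul, ← kron_conjT]
  exact posSemidef_conjTranspose_mul_self _

lemma tsirelson_key
    (A₀ A₁ : Matrix (Fin a) (Fin a) ℂ) (B₀ B₁ : Matrix (Fin b) (Fin b) ℂ)
    (hA₀ : A₀.IsHermitian) (hA₁ : A₁.IsHermitian)
    (hB₀ : B₀.IsHermitian) (hB₁ : B₁.IsHermitian)
    (hA₀n : ((1 : Matrix (Fin a) (Fin a) ℂ) - A₀ * A₀).PosSemidef)
    (hA₁n : ((1 : Matrix (Fin a) (Fin a) ℂ) - A₁ * A₁).PosSemidef)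
    (hB₀n : ((1 : Matrix (Fin b) (Fin b) ℂ) - B₀ * B₀).PosSemidef)
    (hB₁n : ((1 : Matrix (Fin b) (Fin b) ℂ) - B₁ * B₁).PosSemidef) :
    ((8 : ℂ) • 1 - (((2 * Real.sqrt 2 : ℝ) : ℂ)) •
      (A₀ ⊗ₖ (B₀ + B₁) + A₁ ⊗ₖ (B₀ - B₁))).PosSemidef := by
  set s : ℂ := ((Real.sqrt 2 : ℝ) : ℂ) with hs_def
  have hs : s * s = 2 := by
    rw [hs_def, ← Complex.ofReal_mul, Real.mul_self_sqrt (by norm_num)]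
    norm_num
  set P : Matrix (Fin a × Fin b) (Fin a × Fin b) ℂ :=
    s • (A₀ ⊗ₖ 1) - 1 ⊗ₖ (B₀ + B₁) with hP_def
  set Q : Matrix (Fin a × Fin b) (Fin a × Fin b) ℂ :=
    s • (A₁ ⊗ₖ 1) - 1 ⊗ₖ (B₀ - B₁) with hQ_def
  have hP : Pᴴ = P := by
    simp [hP_def, conjTranspose_smul, kron_conjT, hA₀.eq, hB₀.eq, hB₁.eq, hs_def,
      Complex.star_def, Complex.conj_ofReal]
  have hQ : Qᴴ = Q := by
    simp [hQ_def, conjTranspose_smul, kron_conjT, hA₁.eq, hB₀.eq, hB₁.eq, hs_def,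
      Complex.star_def, Complex.conj_ofReal]
  have hPP : (P * P).PosSemidef := by
    have := posSemidef_conjTranspose_mul_self P; rwa [hP] at this
  have hQQ : (Q * Q).PosSemidef := by
    have := posSemidef_conjTranspose_mul_self Q; rwa [hQ] at this
  have hcs : ((2 * Real.sqrt 2 : ℝ) : ℂ) = 2 * s := by push_cast [hs_def]; ring
  have hid : (8 : ℂ) • (1 : Matrix (Fin a × Fin b) (Fin a × Fin b) ℂ) -
      (((2 * Real.sqrt 2 : ℝ) : ℂ)) • (A₀ ⊗ₖ (B₀ + B₁) + A₁ ⊗ₖ (B₀ - B₁)) =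
      P * P + Q * Q +
        (((1 : Matrix (Fin a) (Fin a) ℂ) - A₀ * A₀) ⊗ₖ 1 + ((1 : Matrix (Fin a) (Fin a) ℂ) - A₀ * A₀) ⊗ₖ 1) +
        (((1 : Matrix (Fin a) (Fin a) ℂ) - A₁ * A₁) ⊗ₖ 1 + ((1 : Matrix (Fin a) (Fin a) ℂ) - A₁ * A₁) ⊗ₖ 1) +
        ((1 : Matrix (Fin a) (Fin a) ℂ) ⊗ₖ ((1 : Matrix (Fin b) (Fin b) ℂ) - B₀ * B₀) + (1 : Matrix (Fin a) (Fin a) ℂ) ⊗ₖ ((1 : Matrix (Fin b) (Fin b) ℂ) - B₀ * B₀)) +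
        ((1 : Matrix (Fin a) (Fin a) ℂ) ⊗ₖ ((1 : Matrix (Fin b) (Fin b) ℂ) - B₁ * B₁) + (1 : Matrix (Fin a) (Fin a) ℂ) ⊗ₖ ((1 : Matrix (Fin b) (Fin b) ℂ) - B₁ * B₁)) := by
    rw [hcs]
    simp only [hP_def, hQ_def, sub_mul, mul_sub, smul_mul_assoc, mul_smul_comm, smul_smul,
      ← mul_kronecker_mul, Matrix.mul_one, Matrix.one_mul, hs, mul_add, add_mul,
      kron_sub, sub_kron, kronecker_add, add_kronecker, one_kronecker_one, smul_add, smul_sub]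
    module
  rw [hid]
  exact ((((hPP.add hQQ).add
    ((kron_psd hA₀n .one).add (kron_psd hA₀n .one))).add
    ((kron_psd hA₁n .one).add (kron_psd hA₁n .one))).add
    ((kron_psd .one hB₀n).add (kron_psd .one hB₀n))).add
    ((kron_psd .one hB₁n).add (kron_psd .one hB₁n))

lemma psd_trace_nonneg {n : Type*} [Fintype n] [DecidableEq n]
    {M : Matrix n n ℂ} (hM : M.PosSemidef) : 0 ≤ M.trace := by
  rw [Matrix.trace]
  apply Finset.sum_nonneg
  intro i _
  have := hM.dotProduct_mulVec_nonneg (Pi.single i 1)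
  simpa [dotProduct, Matrix.mulVec, Pi.single_apply, Matrix.diag] using this

lemma trace_mul_psd_nonneg {n : Type*} [Fintype n] [DecidableEq n]
    {ρ M : Matrix n n ℂ} (hρ : ρ.PosSemidef) (hM : M.PosSemidef) :
    0 ≤ (ρ * M).trace := by
  obtain ⟨B, rfl⟩ := posSemidef_iff_eq_transpose_mul_self.mp hM
  rw [← mul_assoc, Matrix.trace_mul_cycle]
  exact psd_trace_nonneg (hρ.mul_mul_conjTranspose_same B)


/-- Tsirelson's bound: for Hermitian observables `A₀, A₁` on `H_A` and
`B₀, B₁` on `H_B` of operator norm at most 1 (expressed as `I - A² ⪰ 0`, which for a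
Hermitian matrix is equivalent to `‖A‖ ≤ 1`), acting on different tensor factors, and
any state `ρ` on `H_A ⊗ H_B`,
`|⟨A₀B₀⟩ + ⟨A₀B₁⟩ + ⟨A₁B₀⟩ − ⟨A₁B₁⟩| ≤ 2√2`, where `⟨A B⟩ = Tr[ρ (A ⊗ B)]`. -/
theorem tsirelson_bound {a b : ℕ}
    (A₀ A₁ : Matrix (Fin a) (Fin a) ℂ) (B₀ B₁ : Matrix (Fin b) (Fin b) ℂ)
    (hA₀ : A₀.IsHermitian) (hA₁ : A₁.IsHermitian)
    (hB₀ : B₀.IsHermitian) (hB₁ : B₁.IsHermitian)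
    (hA₀n : ((1 : Matrix (Fin a) (Fin a) ℂ) - A₀ * A₀).PosSemidef)
    (hA₁n : ((1 : Matrix (Fin a) (Fin a) ℂ) - A₁ * A₁).PosSemidef)
    (hB₀n : ((1 : Matrix (Fin b) (Fin b) ℂ) - B₀ * B₀).PosSemidef)
    (hB₁n : ((1 : Matrix (Fin b) (Fin b) ℂ) - B₁ * B₁).PosSemidef)
    (ρ : Matrix (Fin a × Fin b) (Fin a × Fin b) ℂ)
    (hρ : ρ.PosSemidef) (hρtr : ρ.trace = 1) :
    ‖(ρ * (A₀ ⊗ₖ B₀)).trace + (ρ * (A₀ ⊗ₖ B₁)).trace +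
        (ρ * (A₁ ⊗ₖ B₀)).trace - (ρ * (A₁ ⊗ₖ B₁)).trace‖
      ≤ 2 * Real.sqrt 2 := by
  set c : ℂ := ((2 * Real.sqrt 2 : ℝ) : ℂ) with hc_def
  set C : Matrix (Fin a × Fin b) (Fin a × Fin b) ℂ :=
    A₀ ⊗ₖ (B₀ + B₁) + A₁ ⊗ₖ (B₀ - B₁) with hC_def
  set t : ℂ := (ρ * (A₀ ⊗ₖ B₀)).trace + (ρ * (A₀ ⊗ₖ B₁)).trace +
      (ρ * (A₁ ⊗ₖ B₀)).trace - (ρ * (A₁ ⊗ₖ B₁)).trace with ht_def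
  have htC : (ρ * C).trace = t := by
    rw [ht_def, hC_def]
    simp only [kronecker_add, kron_sub, mul_add, mul_sub, Matrix.trace_add, Matrix.trace_sub]
    ring
  have key₁ := tsirelson_key A₀ A₁ B₀ B₁ hA₀ hA₁ hB₀ hB₁ hA₀n hA₁n hB₀n hB₁n
  have key₂ := tsirelson_key (-A₀) (-A₁) B₀ B₁ hA₀.neg hA₁.neg hB₀ hB₁
    (by simpa [neg_mul_neg] using hA₀n) (by simpa [neg_mul_neg] using hA₁n) hB₀n hB₁n
  have hCneg : (-A₀) ⊗ₖ (B₀ + B₁) + (-A₁) ⊗ₖ (B₀ - B₁) = -C := by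
    rw [hC_def, neg_kron, neg_kron]; abel
  rw [hCneg] at key₂
  have h₁ : (0:ℂ) ≤ 8 - c * t := by
    have := trace_mul_psd_nonneg hρ key₁
    rwa [mul_sub, Matrix.trace_sub, mul_smul_comm, mul_smul_comm, Matrix.trace_smul,
      Matrix.trace_smul, Matrix.mul_one, hρtr, htC, smul_eq_mul, smul_eq_mul, mul_one] at this
  have h₂ : (0:ℂ) ≤ 8 + c * t := by
    have := trace_mul_psd_nonneg hρ key₂
    rw [mul_sub, Matrix.trace_sub, mul_smul_comm, mul_smul_comm, Matrix.trace_smul,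
      Matrix.trace_smul, Matrix.mul_one, hρtr, smul_eq_mul, smul_eq_mul, mul_one] at this
    rw [mul_neg, Matrix.trace_neg, htC, mul_neg, sub_neg_eq_add] at this
    exact this
  obtain ⟨h₁re, h₁im⟩ := Complex.le_def.mp h₁
  obtain ⟨h₂re, h₂im⟩ := Complex.le_def.mp h₂
  have hsq : Real.sqrt 2 * Real.sqrt 2 = 2 := Real.mul_self_sqrt (by norm_num)
  have hspos : 0 < Real.sqrt 2 := Real.sqrt_pos.mpr (by norm_num)
  have htim : t.im = 0 := by
    simp only [hc_def, Complex.sub_im, Complex.add_im, Complex.mul_im, Complex.ofReal_re,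
      Complex.ofReal_im, Complex.zero_im] at h₁im
    norm_num at h₁im
    exact h₁im
  have h₁re' : (2 * Real.sqrt 2) * t.re ≤ 8 := by
    simp only [hc_def, Complex.sub_re, Complex.mul_re, Complex.ofReal_re, Complex.ofReal_im,
      Complex.zero_re, htim] at h₁re
    norm_num at h₁re ⊢
    linarith
  have h₂re' : -(8:ℝ) ≤ (2 * Real.sqrt 2) * t.re := by
    simp only [hc_def, Complex.add_re, Complex.mul_re, Complex.ofReal_re, Complex.ofReal_im,
      Complex.zero_re, htim] at h₂re
    norm_num at h₂re ⊢
    linarith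
  have habs : ‖t‖ = |t.re| := by
    rw [Complex.norm_def, Complex.normSq_apply, htim]
    simp [Real.sqrt_mul_self_eq_abs]
  rw [habs]
  rw [abs_le]
  constructor
  · nlinarith
  · nlinarith
end

section
/- For the channel R_α of Eq. (counter) with α ∈ [0,1], the CHSH-type correlator defined by c_α := |⟨A₀B₀⟩ + ⟨A₀B₁⟩ + ⟨A₁B₀⟩ − ⟨A₁B₁⟩| with ⟨A_nB_m⟩ = Tr[(σ_z^{A'} ⊗ |n⟩⟨n|_A ⊗ σ_z^{B'} ⊗ |m⟩⟨m|_B ⊗ I) R_α], equals |4 − 6α|. -/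
open Matrix BigOperators

/-- A qubit index. -/
abbrev Q := Fin 2

/-- The state `|Ψ_α⟩ = √α|00⟩ + √(1−α)|11⟩` on the pair of qubits `W_A W_B`. -/
noncomputable def psiW (α : ℝ) : Q × Q → ℂ := fun w =>
  if w = (0, 0) then (Real.sqrt α : ℂ)
  else if w = (1, 1) then (Real.sqrt (1 - α) : ℂ) else 0

/-- The product vector `|I⟩⟩_{AB,AB} ⊗ (1/√2)|I⟩⟩_{X_A X_B} ⊗ |Ψ_α⟩_{W_A W_B}` on the
eight qubits `(A, B, A_ref, B_ref, X_A, X_B, W_A, W_B)`. -/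
noncomputable def preVec (α : ℝ) : Q × Q × Q × Q × Q × Q × Q × Q → ℂ :=
  fun (a, b, ar, br, xA, xB, wA, wB) =>
    (if a = ar then (1 : ℂ) else 0) * (if b = br then (1 : ℂ) else 0) *
      (((Real.sqrt 2 : ℂ))⁻¹ * if xA = xB then 1 else 0) * psiW α (wA, wB)

/-- `|Φ_α⟩ = (𝔼 ⊗ I) (|I⟩⟩_{AB,AB} ⊗ (1/√2)|I⟩⟩_{X_A X_B} ⊗ |Ψ_α⟩)`, where `𝔼` is the
tensor product of the two controlled swaps: `A ↔ X_A` controlled by `W_A`, and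
`B ↔ X_B` controlled by `W_B`. -/
noncomputable def phiVec (α : ℝ) : Q × Q × Q × Q × Q × Q × Q × Q → ℂ :=
  fun (a, b, ar, br, xA, xB, wA, wB) =>
    preVec α (if wA = 1 then xA else a, if wB = 1 then xB else b, ar, br,
      if wA = 1 then a else xA, if wB = 1 then b else xB, wA, wB)

/-- The Kraus vectors `|K^α_{mn}⟩⟩ = [(Σ_{A W_A})^{mn} ⊗ ⟨m|_{X_A}⟨n|_{X_B}] |Φ_α⟩`,
where `Σ_{A W_A} = |1⟩⟨1|_{W_A} ⊗ σ_x^A + |0⟩⟨0|_{W_A} ⊗ I_A`, as vectors on the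
output systems `(A, W_A, W_B, B')` tensored with the reference input systems `(A, B)`. -/
noncomputable def Kvec (α : ℝ) (m n : Q) : (Q × Q × Q × Q) × (Q × Q) → ℂ :=
  fun ((a, wA, wB, bo), (ar, br)) =>
    phiVec α (if m = 1 ∧ n = 1 ∧ wA = 1 then a + 1 else a, bo, ar, br, m, n, wA, wB)

/-- The Choi–Jamiołkowski operator `R_α = ∑_{m,n} |K^α_{mn}⟩⟩⟨⟨K^α_{mn}|` of the
channel `𝓡_α`. -/
noncomputable def Ralpha (α : ℝ) :
    Matrix ((Q × Q × Q × Q) × (Q × Q)) ((Q × Q × Q × Q) × (Q × Q)) ℂ :=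
  Matrix.of fun x y =>
    ∑ m : Q, ∑ n : Q, Kvec α m n x * (starRingEnd ℂ) (Kvec α m n y)

/-- The `σ_z` eigenvalue attached to a computational-basis index. -/
def sz (k : Q) : ℂ := if k = 0 then 1 else -1

/-- The correlator `⟨A_n B_m⟩ = Tr[(σ_z^{A'} ⊗ |n⟩⟨n|_A ⊗ σ_z^{B'} ⊗ |m⟩⟨m|_B ⊗ I) R_α]`
(with `σ_z` measured on the output qubits `A` and `B`, identity on `W_A W_B`). -/
noncomputable def corr (α : ℝ) (n m : Q) : ℂ :=
  ∑ a : Q, ∑ wA : Q, ∑ wB : Q, ∑ bo : Q,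
    sz a * sz bo * Ralpha α ((a, wA, wB, bo), (n, m)) ((a, wA, wB, bo), (n, m))

/-- for the channel `𝓡_α` with `α ∈ [0,1]`, the CHSH-type correlator
`c_α = |⟨A₀B₀⟩ + ⟨A₀B₁⟩ + ⟨A₁B₀⟩ − ⟨A₁B₁⟩|` equals `|4 − 6α|`. -/
theorem chsh_correlator_eq (α : ℝ) (h0 : 0 ≤ α) (h1 : α ≤ 1) :
    ‖corr α 0 0 + corr α 0 1 + corr α 1 0 - corr α 1 1‖ = |4 - 6 * α| := by
  simp only [corr, Ralpha, Kvec, phiVec, preVec, psiW, sz, Fin.sum_univ_succ, Fin.sum_univ_zero,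
    Matrix.of_apply]
  norm_num [Complex.ext_iff]
  simp only [show (1 + 1 : Q) = 0 from rfl]
  norm_num [← Complex.ofReal_inv, ← Complex.ofReal_mul, ← Complex.ofReal_add,
    ← Complex.ofReal_neg, ← Complex.ofReal_sub, Complex.norm_real, Real.norm_eq_abs]
  have hA : Real.sqrt α ^ 2 = α := Real.sq_sqrt h0
  have hB : Real.sqrt (1 - α) ^ 2 = 1 - α := Real.sq_sqrt (by linarith)
  have h2 : (Real.sqrt 2)⁻¹ ^ 2 = (2:ℝ)⁻¹ := by
    rw [inv_pow, Real.sq_sqrt (by norm_num : (0:ℝ) ≤ 2)]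
  congr 1
  ring_nf
  rw [hA, hB, h2]
  ring
end
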